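/- Let (V,g) be a scalar product space of dimension n = 2t ≥ 4 with an orthonormal basis (T₁,…,T_t,S₁,…,S_t) where g(Tᵢ,Tᵢ) = −1 and g(Sᵢ,Sᵢ) = 1, and let J be the endomorphism of V defined by JTᵢ = Sᵢ and JSᵢ = Tᵢ for all 1 ≤ i ≤ t. Then J is g-skew-adjoint with J² = id, and for every μ ≠ 0 the anti-Clifford algebraic curvature tensor R = 3μ·R⁰ − μ·R^J is not totally Jacobi-dual. -/

import Mathlib

open Module Finset

/-- The algebraic curvature tensor `R⁰` of constant sectional curvature one. -/
def R0 {V : Type*} [AddCommGroup V] [Module ℝ V] (g : LinearMap.BilinForm ℝ V)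
    (X Y Z W : V) : ℝ :=
  g Y Z * g X W - g X Z * g Y W

/-- The algebraic curvature tensor `R^J` generated by a `g`-skew-adjoint endomorphism `J`. -/
def RJ {V : Type*} [AddCommGroup V] [Module ℝ V] (g : LinearMap.BilinForm ℝ V)
    (J : V →ₗ[ℝ] V) (X Y Z W : V) : ℝ :=
  g (J X) Z * g (J Y) W - g (J Y) Z * g (J X) W + 2 * g (J X) Y * g (J Z) W
/-- the `m = 1` anti-Clifford example. On a scalar product space of
neutral signature and dimension `2t ≥ 4`, with orthonormal basis
`T₁, …, T_t` (timelike) and `S₁, …, S_t` (spacelike), the product structure `J` given by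
`JTᵢ = Sᵢ`, `JSᵢ = Tᵢ` is `g`-skew-adjoint with `J² = id`, and for every `μ ≠ 0` the
anti-Clifford curvature tensor `R = 3μ R⁰ − μ R^J` is not totally Jacobi-dual. -/
theorem product_structure_not_totally_jacobiDual
    {V : Type*} [AddCommGroup V] [Module ℝ V] [FiniteDimensional ℝ V]
    (g : LinearMap.BilinForm ℝ V) (hsymm : ∀ x y, g x y = g y x) (hnd : g.Nondegenerate)
    (t : ℕ) (ht : 2 ≤ t) (b : Basis (Fin t ⊕ Fin t) ℝ V)
    (hb : ∀ i j, g (b i) (b j)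
      = if i = j then Sum.elim (fun _ => (-1 : ℝ)) (fun _ => 1) i else 0)
    (J : V →ₗ[ℝ] V)
    (hJT : ∀ i : Fin t, J (b (Sum.inl i)) = b (Sum.inr i))
    (hJS : ∀ i : Fin t, J (b (Sum.inr i)) = b (Sum.inl i)) :
    (∀ x y : V, g (J x) y = - g x (J y)) ∧
    J ∘ₗ J = LinearMap.id ∧
    ∀ μ : ℝ, μ ≠ 0 →
      ∀ R : V → V → V → V → ℝ,
        (∀ X Y Z W, R X Y Z W = 3 * μ * R0 g X Y Z W - μ * RJ g J X Y Z W) →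
        ∀ Jac : V → V →ₗ[ℝ] V, (∀ X Y Z, g (Jac X Y) Z = R Y X X Z) →
          ¬ (∀ X Y : V, X ≠ 0 →
              (∃ lam : ℝ, Module.End.HasEigenvector (Jac X) lam Y) →
              ∃ lam : ℝ, Module.End.HasEigenvector (Jac Y) lam X) := by
  have skew' : g.compl₁₂ J LinearMap.id = -(g.compl₁₂ LinearMap.id J) := by
    apply b.ext
    intro i
    apply b.ext
    intro j
    rcases i with i | i <;> rcases j with j | j <;>
      simp [LinearMap.compl₁₂_apply, hJT, hJS, hb] <;>
      split <;> simp_all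
  have skew : ∀ x y : V, g (J x) y = - g x (J y) := by
    intro x y
    have := LinearMap.congr_fun (LinearMap.congr_fun skew' x) y
    simpa [LinearMap.compl₁₂_apply] using this
  refine ⟨skew, ?_, ?_⟩
  · apply b.ext
    rintro (i | i) <;> simp [hJT, hJS]
  intro μ hμ R hR Jac hJac H
  set i0 : Fin t := ⟨0, by omega⟩ with hi0
  set i1 : Fin t := ⟨1, by omega⟩ with hi1
  have hne : i0 ≠ i1 := by simp [hi0, hi1, Fin.ext_iff]
  have T0d : True := trivial
  set X : V := b (Sum.inl i0) + b (Sum.inr i0) with hX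
  set Y : V := b (Sum.inl i0) + b (Sum.inr i1) with hY
  -- scalar computations
  have gTT : g (b (Sum.inl i0)) (b (Sum.inl i0)) = -1 := by simpa using hb (Sum.inl i0) (Sum.inl i0)
  have gSS : g (b (Sum.inr i0)) (b (Sum.inr i0)) = 1 := by simpa using hb (Sum.inr i0) (Sum.inr i0)
  have gT1T1 : g (b (Sum.inl i1)) (b (Sum.inl i1)) = -1 := by simpa using hb (Sum.inl i1) (Sum.inl i1)
  have gS1S1 : g (b (Sum.inr i1)) (b (Sum.inr i1)) = 1 := by simpa using hb (Sum.inr i1) (Sum.inr i1)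
  have gTS : g (b (Sum.inl i0)) (b (Sum.inr i0)) = 0 := by simpa using hb (Sum.inl i0) (Sum.inr i0)
  have gST : g (b (Sum.inr i0)) (b (Sum.inl i0)) = 0 := by simpa using hb (Sum.inr i0) (Sum.inl i0)
  have gTS1 : g (b (Sum.inl i0)) (b (Sum.inr i1)) = 0 := by simpa using hb (Sum.inl i0) (Sum.inr i1)
  have gS1T : g (b (Sum.inr i1)) (b (Sum.inl i0)) = 0 := by simpa using hb (Sum.inr i1) (Sum.inl i0)
  have gSS1 : g (b (Sum.inr i0)) (b (Sum.inr i1)) = 0 := by simpa [hne] using hb (Sum.inr i0) (Sum.inr i1)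
  have gS1S : g (b (Sum.inr i1)) (b (Sum.inr i0)) = 0 := by simpa [hne.symm] using hb (Sum.inr i1) (Sum.inr i0)
  have gTT1 : g (b (Sum.inl i0)) (b (Sum.inl i1)) = 0 := by simpa [hne] using hb (Sum.inl i0) (Sum.inl i1)
  have gT1T : g (b (Sum.inl i1)) (b (Sum.inl i0)) = 0 := by simpa [hne.symm] using hb (Sum.inl i1) (Sum.inl i0)
  have gT1S : g (b (Sum.inl i1)) (b (Sum.inr i0)) = 0 := by simpa using hb (Sum.inl i1) (Sum.inr i0)
  have gST1 : g (b (Sum.inr i0)) (b (Sum.inl i1)) = 0 := by simpa using hb (Sum.inr i0) (Sum.inl i1)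
  have gT1S1 : g (b (Sum.inl i1)) (b (Sum.inr i1)) = 0 := by simpa using hb (Sum.inl i1) (Sum.inr i1)
  have gS1T1 : g (b (Sum.inr i1)) (b (Sum.inl i1)) = 0 := by simpa using hb (Sum.inr i1) (Sum.inl i1)
  have hJX : J X = X := by rw [hX, map_add, hJT, hJS, add_comm]
  have hJY : J Y = b (Sum.inr i0) + b (Sum.inl i1) := by rw [hY, map_add, hJT, hJS]
  -- Jac X Y = 0
  have hA : Jac X Y = 0 := by
    apply hnd.1
    intro Z
    rw [hJac, hR]
    simp only [R0, RJ, hJX, hJY, hX, hY, map_add, hJT, hJS, LinearMap.add_apply,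
      gTT, gSS, gTS, gST, gTS1, gS1T, gSS1, gS1S, gTT1, gT1T, gT1S, gST1,
      gT1S1, gS1T1, gT1T1, gS1S1]
    ring
  -- Jac Y X = (3μ) • (Y + J Y)
  have hB : Jac Y X = (3 * μ) • (Y + J Y) := by
    have : Jac Y X - (3 * μ) • (Y + J Y) = 0 := by
      apply hnd.1
      intro Z
      rw [map_sub, LinearMap.sub_apply, hJac, hR]
      simp only [R0, RJ, hJX, hJY, hX, hY, map_add, hJT, hJS, map_smul, LinearMap.add_apply,
        LinearMap.smul_apply, smul_eq_mul,
        gTT, gSS, gTS, gST, gTS1, gS1T, gSS1, gS1S, gTT1, gT1T, gT1S, gST1,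
        gT1S1, gS1T1, gT1T1, gS1S1]
      ring
    exact sub_eq_zero.mp this
  have hX0 : X ≠ 0 := by
    intro h
    have := congrArg (fun v => b.repr v (Sum.inl i0)) h
    simp [hX, Finsupp.single_apply] at this
  have hY0 : Y ≠ 0 := by
    intro h
    have := congrArg (fun v => b.repr v (Sum.inl i0)) h
    simp [hY, Finsupp.single_apply] at this
  obtain ⟨lam, hev⟩ := H X Y hX0 ⟨0, Module.End.hasEigenvector_iff.mpr
    ⟨Module.End.mem_eigenspace_iff.mpr (by simp [hA]), hY0⟩⟩
  have heq : (3 * μ) • (Y + J Y) = lam • X := by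
    rw [← hB]; exact hev.apply_eq_smul
  have := congrArg (fun v => b.repr v (Sum.inl i1)) heq
  simp [hX, hY, hJY, hJT, hJS, Finsupp.single_apply, hne, hne.symm] at this
  exact hμ this
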